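/- The series \(\sum_{n=1}^{\infty} \frac{n q^n}{1 - q^n}\) converges in K (all denominators are nonzero since \(|q^n| < 1\) for all n ≥ 1), and the absolute value of \(2 \sum_{n=1}^{\infty} \frac{n q^n}{1 - q^n}\) equals \(|2| \cdot |q|\). -/

import Mathlib

/-- Equation (8): for a complete nonarchimedean field `K` and `q ∈ K` with `0 < |q| < 1`,
the series `∑_{n≥1} n·qⁿ/(1-qⁿ)` converges, and `|2·∑_{n≥1} n·qⁿ/(1-qⁿ)| = |2|·|q|`.
Here `n·qⁿ` is the `n`-fold sum `qⁿ + ⋯ + qⁿ`. -/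
theorem tate_series_constant_part {K : Type*} [NormedField K] [CompleteSpace K]
    (hu : IsUltrametricDist K) (q : K) (hq0 : 0 < ‖q‖) (hq1 : ‖q‖ < 1) :
    Summable (fun n : ℕ => ((n + 1) • q ^ (n + 1)) / (1 - q ^ (n + 1))) ∧
      ‖(2 : K) * ∑' n : ℕ, ((n + 1) • q ^ (n + 1)) / (1 - q ^ (n + 1))‖ = ‖(2 : K)‖ * ‖q‖ := by
  haveI := hu
  set f : ℕ → K := fun n => ((n + 1) • q ^ (n + 1)) / (1 - q ^ (n + 1)) with hf
  have hqpow : ∀ n : ℕ, ‖q ^ (n + 1)‖ < 1 := fun n => by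
    rw [norm_pow]; exact pow_lt_one₀ (le_of_lt hq0) hq1 (Nat.succ_ne_zero n)
  have hden : ∀ n : ℕ, ‖1 - q ^ (n + 1)‖ = 1 := by
    intro n
    have hne : ‖(1 : K)‖ ≠ ‖-(q ^ (n + 1))‖ := by
      rw [norm_one, norm_neg]; exact (hqpow n).ne'
    have := IsUltrametricDist.norm_add_eq_max_of_norm_ne_norm (x := (1 : K))
      (y := -(q ^ (n + 1))) hne
    rw [sub_eq_add_neg, this, norm_one, norm_neg]
    exact max_eq_left (hqpow n).le
  have hbound : ∀ n : ℕ, ‖f n‖ ≤ ‖q‖ ^ (n + 1) := by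
    intro n
    rw [hf]
    simp only [norm_div, hden n, div_one]
    calc ‖(n + 1) • q ^ (n + 1)‖ ≤ ‖q ^ (n + 1)‖ :=
          IsUltrametricDist.norm_nsmul_le _ _
      _ = ‖q‖ ^ (n + 1) := norm_pow _ _
  have hgeom : Summable (fun n : ℕ => ‖q‖ ^ (n + 1)) := by
    have := (summable_geometric_of_lt_one (le_of_lt hq0) hq1).mul_left ‖q‖
    simpa [pow_succ'] using this
  have hsum : Summable f := Summable.of_norm_bounded hgeom hbound
  refine ⟨hsum, ?_⟩
  have hf0 : ‖f 0‖ = ‖q‖ := by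
    have h0 : ‖1 - q‖ = 1 := by simpa using hden 0
    simp [hf, norm_div, h0]
  have htail : ‖∑' n : ℕ, f (n + 1)‖ ≤ ‖q‖ ^ 2 := by
    refine IsUltrametricDist.norm_tsum_le_of_forall_le_of_nonneg (by positivity) ?_
    intro n
    refine (hbound (n + 1)).trans ?_
    exact pow_le_pow_of_le_one (le_of_lt hq0) (le_of_lt hq1) (by omega)
  have htail_lt : ‖∑' n : ℕ, f (n + 1)‖ < ‖q‖ := by
    refine htail.trans_lt ?_
    calc ‖q‖ ^ 2 = ‖q‖ * ‖q‖ := sq ‖q‖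
      _ < 1 * ‖q‖ := by exact mul_lt_mul_of_pos_right hq1 hq0
      _ = ‖q‖ := one_mul _
  have hS : ‖∑' n : ℕ, f n‖ = ‖q‖ := by
    rw [Summable.tsum_eq_zero_add hsum]
    have hne : ‖f 0‖ ≠ ‖∑' n : ℕ, f (n + 1)‖ := by
      rw [hf0]; exact htail_lt.ne'
    rw [IsUltrametricDist.norm_add_eq_max_of_norm_ne_norm hne, hf0]
    exact max_eq_left (htail_lt.le)
  rw [norm_mul, hS]
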